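/- Let φ be a solution of the normalized equation EQ_λ on (0,∞) such that φ(t) > 0 for all t ∈ (0,t₀] and t₀ ∈ (0,∞) is a local minimum point of φ. Then φ(t) > 0 for every t ∈ (0,∞). -/

import Mathlib

open Real Set

lemma abs_rpow_eq_sq (x p : ℝ) : |x| ^ p = (x^2) ^ (p/2) := by
  rw [← sq_abs x, ← Real.rpow_natCast |x| 2, ← Real.rpow_mul (abs_nonneg x)]
  ring_nf

lemma energy_deriv (n : ℕ) (lam q : ℝ) (hq : 1 < q)
    (φ φ' φ'' : ℝ → ℝ)
    (hd1 : ∀ t ∈ Ioi (0:ℝ), HasDerivAt φ (φ' t) t)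
    (hd2 : ∀ t ∈ Ioi (0:ℝ), HasDerivAt φ' (φ'' t) t)
    (hode : ∀ t ∈ Ioi (0:ℝ),
      φ'' t + ((n : ℝ) - 1) * ((exp (2*t) + 1) / (exp (2*t) - 1)) * φ' t
        = lam * (φ t - |φ t| ^ (q - 1) * φ t))
    (t : ℝ) (ht : t ∈ Ioi (0:ℝ)) :
    HasDerivAt (fun t => (1/2)*(φ' t)^2 + lam * (|φ t| ^ (q+1) / (q+1) - (φ t)^2/2))
      (-(((n:ℝ)-1) * ((exp (2*t) + 1) / (exp (2*t) - 1)) * (φ' t)^2)) t := by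
  have hq1 : (q:ℝ) + 1 ≠ 0 := by linarith
  have h1 : HasDerivAt (fun t => (1/2)*(φ' t)^2) (φ' t * φ'' t) t := by
    have := ((hd2 t ht).pow 2).const_mul (1/2 : ℝ)
    refine this.congr_deriv ?_
    push_cast
    ring
  have hsq : ∀ s ∈ Ioi (0:ℝ), HasDerivAt (fun u => (φ u)^2) (2 * φ s * φ' s) s := by
    intro s hs
    have := (hd1 s hs).pow 2
    refine this.congr_deriv ?_
    push_cast
    ring
  have hrp : HasDerivAt (fun y : ℝ => y ^ ((q+1)/2))
      (((q+1)/2) * ((φ t)^2) ^ ((q+1)/2 - 1)) ((φ t)^2) :=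
    Real.hasDerivAt_rpow_const (Or.inr (by linarith))
  have h2 : HasDerivAt (fun u => ((φ u)^2) ^ ((q+1)/2))
      (((q+1)/2) * ((φ t)^2) ^ ((q+1)/2 - 1) * (2 * φ t * φ' t)) t :=
    by have := hrp.comp t (hsq t ht); exact this
  have habs1 : (fun u => |φ u| ^ (q+1)) = (fun u => ((φ u)^2) ^ ((q+1)/2)) :=
    funext fun u => abs_rpow_eq_sq (φ u) (q+1)
  have habs2 : ((φ t)^2) ^ ((q+1)/2 - 1) = |φ t| ^ (q - 1) := by
    rw [abs_rpow_eq_sq (φ t) (q-1)]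
    ring_nf
  have h2' : HasDerivAt (fun u => |φ u| ^ (q+1))
      (((q+1)/2) * (|φ t| ^ (q-1)) * (2 * φ t * φ' t)) t := by
    rw [habs1, ← habs2]; exact h2
  have h3 : HasDerivAt (fun u => lam * (|φ u| ^ (q+1) / (q+1) - (φ u)^2/2))
      (lam * ((((q+1)/2) * (|φ t| ^ (q-1)) * (2 * φ t * φ' t)) / (q+1) - (2 * φ t * φ' t)/2)) t :=
    ((h2'.div_const (q+1)).sub ((hsq t ht).div_const 2)).const_mul lam
  have := h1.add h3
  refine this.congr_deriv ?_
  have hODE := hode t ht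
  have hφ'' : φ'' t = lam * (φ t - |φ t| ^ (q - 1) * φ t)
      - ((n : ℝ) - 1) * ((exp (2*t) + 1) / (exp (2*t) - 1)) * φ' t := by linarith
  rw [hφ'']
  field_simp
  ring

/-- If a solution φ of the normalized equation EQ_λ is positive on (0,t₀] and t₀ > 0
is a local minimum point of φ, then φ stays positive on all of (0,∞). -/
theorem positive_after_local_min
    (n : ℕ) (hn : 2 ≤ n) (lam q : ℝ) (hlam : 0 < lam) (hq : 1 < q)
    (φ φ' φ'' : ℝ → ℝ)
    (hd1 : ∀ t ∈ Ioi (0:ℝ), HasDerivAt φ (φ' t) t)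
    (hd2 : ∀ t ∈ Ioi (0:ℝ), HasDerivAt φ' (φ'' t) t)
    (hode : ∀ t ∈ Ioi (0:ℝ),
      φ'' t + ((n : ℝ) - 1) * ((exp (2*t) + 1) / (exp (2*t) - 1)) * φ' t
        = lam * (φ t - |φ t| ^ (q - 1) * φ t))
    (t₀ : ℝ) (ht₀ : 0 < t₀)
    (hpos : ∀ t ∈ Ioc (0:ℝ) t₀, 0 < φ t)
    (hmin : IsLocalMin φ t₀) :
    ∀ t ∈ Ioi (0:ℝ), 0 < φ t := by
  have hp0 : 0 < φ t₀ := hpos t₀ ⟨ht₀, le_refl t₀⟩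
  have hφ'0 : φ' t₀ = 0 := hmin.hasDerivAt_eq_zero (hd1 t₀ ht₀)
  -- φ t₀ ≤ 1 via second-derivative test
  have hle1 : φ t₀ ≤ 1 := by
    by_contra hgt
    push_neg at hgt
    have habs : |φ t₀| = φ t₀ := abs_of_pos hp0
    have h1lt : 1 < |φ t₀| ^ (q-1) := by
      rw [habs]
      exact Real.one_lt_rpow_iff_of_pos hp0 |>.2 (Or.inl ⟨hgt, by linarith⟩)
    have hφ'' : φ'' t₀ < 0 := by
      have hODE := hode t₀ ht₀
      rw [hφ'0, mul_zero, add_zero] at hODE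
      nlinarith [mul_pos hlam (mul_pos hp0 (sub_pos.2 h1lt))]
    have hslope := hasDerivAt_iff_tendsto_slope.1 (hd2 t₀ ht₀)
    have hev : ∀ᶠ z in nhdsWithin t₀ {t₀}ᶜ, slope φ' t₀ z < 0 :=
      hslope.eventually_lt_const hφ''
    have hev' : ∀ᶠ z in nhdsWithin t₀ (Ioi t₀), slope φ' t₀ z < 0 :=
      hev.filter_mono (nhdsWithin_mono _ (fun z hz => ne_of_gt hz))
    have hminev : ∀ᶠ z in nhdsWithin t₀ (Ioi t₀), φ t₀ ≤ φ z :=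
      (hmin.filter_mono nhdsWithin_le_nhds : _)
    obtain ⟨u, hu, hsub⟩ := mem_nhdsGT_iff_exists_Ioo_subset.1 (hev'.and hminev)
    set m := (t₀ + u)/2 with hm
    have hmmem : m ∈ Ioo t₀ u := ⟨by simp [hm]; linarith [mem_Ioi.1 hu], by simp [hm]; linarith [mem_Ioi.1 hu]⟩
    have hder : ∀ z ∈ Ioo t₀ m, φ' z < 0 := by
      intro z hz
      have hzu : z ∈ Ioo t₀ u := ⟨hz.1, lt_trans hz.2 hmmem.2⟩
      have hs := (hsub hzu).1
      rw [slope_def_field, hφ'0] at hs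
      have hzt : 0 < z - t₀ := by linarith [hz.1]
      rcases div_neg_iff.1 (by simpa using hs) with ⟨_, h⟩ | ⟨h, _⟩
      · linarith
      · exact h
    have hanti : StrictAntiOn φ (Icc t₀ m) := by
      apply strictAntiOn_of_deriv_neg (convex_Icc _ _)
      · intro z hz
        exact ((hd1 z (by simp only [mem_Ioi]; linarith [hz.1])).continuousAt).continuousWithinAt
      · intro z hz
        rw [interior_Icc] at hz
        rw [(hd1 z (by simp only [mem_Ioi]; linarith [hz.1])).deriv]
        exact hder z hz
    have h1 : φ m < φ t₀ := hanti ⟨le_refl _, le_of_lt hmmem.1⟩ ⟨le_of_lt hmmem.1, le_refl _⟩ hmmem.1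
    have h2 : φ t₀ ≤ φ m := (hsub hmmem).2
    linarith
  -- main argument via energy
  intro t ht
  rcases le_or_gt t t₀ with hle | hlt
  · exact hpos t ⟨ht, hle⟩
  by_contra hc
  push_neg at hc
  set E : ℝ → ℝ := fun u => (1/2)*(φ' u)^2 + lam * (|φ u| ^ (q+1) / (q+1) - (φ u)^2/2) with hE
  have hEderiv := energy_deriv n lam q hq φ φ' φ'' hd1 hd2 hode
  -- find a zero of φ in [t₀, t]
  have hcont : ContinuousOn φ (Icc t₀ t) := fun z hz =>
    ((hd1 z (by simp only [mem_Ioi]; linarith [hz.1])).continuousAt).continuousWithinAt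
  obtain ⟨s, hsmem, hφs⟩ := intermediate_value_Icc' (le_of_lt hlt) hcont ⟨hc, le_of_lt hp0⟩
  -- E is antitone on [t₀, s]
  have hanti : AntitoneOn E (Icc t₀ s) := by
    apply antitoneOn_of_deriv_nonpos (convex_Icc _ _)
    · intro z hz
      exact ((hEderiv z (by simp only [mem_Ioi]; linarith [hz.1])).continuousAt).continuousWithinAt
    · intro z hz
      rw [interior_Icc] at hz
      exact ((hEderiv z (by simp only [mem_Ioi]; linarith [hz.1])).differentiableAt).differentiableWithinAt
    · intro z hz
      rw [interior_Icc] at hz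
      have hz0 : z ∈ Ioi (0:ℝ) := by simp only [mem_Ioi]; linarith [hz.1]
      rw [(hEderiv z hz0).deriv]
      have hn1 : (0:ℝ) ≤ (n:ℝ) - 1 := by
        have : (2:ℝ) ≤ (n:ℝ) := by exact_mod_cast hn
        linarith
      have hexp : (0:ℝ) < exp (2*z) - 1 := by
        have : (1:ℝ) < exp (2*z) := by
          rw [← Real.exp_zero]
          exact Real.exp_lt_exp.2 (by linarith [mem_Ioi.1 hz0])
        linarith
      have hfrac : (0:ℝ) ≤ (exp (2*z) + 1) / (exp (2*z) - 1) := by positivity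
      have : (0:ℝ) ≤ ((n:ℝ)-1) * ((exp (2*z) + 1) / (exp (2*z) - 1)) * (φ' z)^2 := by positivity
      linarith
  have hEle : E s ≤ E t₀ :=
    hanti ⟨le_refl _, hsmem.1⟩ ⟨hsmem.1, le_refl _⟩ hsmem.1
  -- E t₀ < 0
  have hEt₀ : E t₀ < 0 := by
    have habs : |φ t₀| = φ t₀ := abs_of_pos hp0
    have hkey : (φ t₀) ^ (q+1) ≤ (φ t₀)^2 := by
      have h1 : (φ t₀) ^ (q+1) = (φ t₀) ^ (q-1) * (φ t₀) ^ (2:ℝ) := by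
        rw [← Real.rpow_add hp0]; ring_nf
      have h2 : (φ t₀) ^ (q-1) ≤ 1 := Real.rpow_le_one (le_of_lt hp0) hle1 (by linarith)
      have h3 : (φ t₀) ^ (2:ℝ) = (φ t₀)^2 := Real.rpow_two (φ t₀)
      rw [h1, h3]
      nlinarith [sq_nonneg (φ t₀)]
    have hsq : (0:ℝ) < (φ t₀)^2 := by positivity
    have : (φ t₀) ^ (q+1) / (q+1) < (φ t₀)^2 / 2 := by
      have h4 : (φ t₀) ^ (q+1) / (q+1) ≤ (φ t₀)^2 / (q+1) := by
        apply div_le_div_of_nonneg_right hkey (by linarith) |>.trans_eq rfl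
      have h5 : (φ t₀)^2 / (q+1) < (φ t₀)^2 / 2 := by
        apply div_lt_div_of_pos_left hsq (by linarith) (by linarith)
      linarith
    simp only [hE, hφ'0, habs]
    nlinarith
  -- E s ≥ 0
  have hEs : 0 ≤ E s := by
    simp only [hE, hφs, abs_zero]
    rw [Real.zero_rpow (by linarith : q + 1 ≠ 0)]
    norm_num
    positivity
  linarith
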